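/- Let R(A', A, A'') be a recollement of abelian categories with functors i^*, i_*, i^!, j_!, j^*, j_*, and let X be a resolving subcategory of A. Assume i_*(i^*(X)) ⊆ X, j_!(j^*(X)) ⊆ X, and j_* is exact. Then: (1) gl.dim_X(A) ≤ gl.dim_{i^*X}(A') + gl.dim_{j^*X}(A'') + 1; (2) gl.dim_{j^*X}(A'') ≤ gl.dim_X(A) (inequalities in ℕ ∪ {∞}). -/

import Mathlib

open CategoryTheory CategoryTheory.Limits

namespace Paper

variable {C : Type*} [Category C] [Abelian C]

/-- A complete projective resolution: an acyclic ℤ-indexed complex of projectives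
such that `Hom(P•, Q)` is exact for every projective `Q`. -/
structure IsCompleteProjectiveResolution (P : ChainComplex C ℤ) : Prop where
  projective : ∀ n : ℤ, Projective (P.X n)
  exactAt : ∀ n : ℤ, P.ExactAt n
  homExact : ∀ (Q : C), Projective Q → ∀ (n : ℤ) (f : P.X n ⟶ Q),
    P.d (n + 1) n ≫ f = 0 → ∃ g : P.X (n - 1) ⟶ Q, P.d n (n - 1) ≫ g = f

/-- An object is Gorenstein projective if it is isomorphic to `Im (P₀ ⟶ P₋₁)`
for some complete projective resolution `P•`. -/
def IsGorensteinProjective (M : C) : Prop :=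
  ∃ P : ChainComplex C ℤ, IsCompleteProjectiveResolution P ∧
    Nonempty (M ≅ Limits.image (P.d 0 (-1)))

variable {D : Type*} [Category D] [Abelian D]

/-- A functor is weak perfect if it sends every exact complex of projective
objects to an exact complex. -/
def WeakPerfect (F : C ⥤ D) [F.Additive] : Prop :=
  ∀ P : ChainComplex C ℤ, (∀ n : ℤ, Projective (P.X n)) → (∀ n : ℤ, P.ExactAt n) →
    ∀ n : ℤ, (((F.mapHomologicalComplex (ComplexShape.down ℤ)).obj P).ExactAt n)

/-- Condition (SP2): for every complete projective resolution `P•` in the target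
category and every projective `Q` in the source category, `Hom(P•, T Q)` is exact. -/
def SatisfiesSP2 (T : C ⥤ D) : Prop :=
  ∀ P : ChainComplex D ℤ, IsCompleteProjectiveResolution P →
    ∀ (Q : C), Projective Q → ∀ (n : ℤ) (f : P.X n ⟶ T.obj Q),
      P.d (n + 1) n ≫ f = 0 → ∃ g : P.X (n - 1) ⟶ T.obj Q, P.d n (n - 1) ≫ g = f

/-- `IsRelativeSyzygy P n A M` : there exists an exact sequence
`0 → A → X_{n-1} → ⋯ → X₀ → M → 0` with every `Xᵢ` satisfying `P`
(defined by splicing short exact sequences). For `n = 0` it degenerates to `A ≅ M`. -/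
def IsRelativeSyzygy (P : C → Prop) : ℕ → C → C → Prop
  | 0, A, M => Nonempty (A ≅ M)
  | n + 1, A, M => ∃ S : ShortComplex C, S.ShortExact ∧ P S.X₂ ∧
      Nonempty (S.X₃ ≅ M) ∧ IsRelativeSyzygy P n A S.X₁

/-- A resolving class of objects: contains all projectives, closed under direct
summands, and for any short exact sequence `0 → A → B → C → 0` with `C` in the class,
`A` is in the class iff `B` is. -/
structure IsResolving (X : Set C) : Prop where
  projective_mem : ∀ P : C, Projective P → P ∈ X
  summand_mem : ∀ M ∈ X, ∀ (N : C) (s : N ⟶ M) (r : M ⟶ N), s ≫ r = 𝟙 N → N ∈ X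
  two_of_three : ∀ S : ShortComplex C, S.ShortExact → S.X₃ ∈ X → (S.X₁ ∈ X ↔ S.X₂ ∈ X)

/-- `HasResolutionLength Y n M` : there is an exact sequence
`0 → P_n → ⋯ → P₀ → M → 0` with all `Pᵢ ∈ Y` (defined by splicing). -/
def HasResolutionLength (Y : Set C) : ℕ → C → Prop
  | 0, M => ∃ P ∈ Y, Nonempty (M ≅ P)
  | n + 1, M => ∃ S : ShortComplex C, S.ShortExact ∧ S.X₂ ∈ Y ∧
      Nonempty (S.X₃ ≅ M) ∧ HasResolutionLength Y n S.X₁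

/-- The `Y`-projective dimension of `M`, in `ℕ∞`. -/
noncomputable def pdim (Y : Set C) (M : C) : ℕ∞ :=
  sInf {n : ℕ∞ | ∃ m : ℕ, n = (m : ℕ∞) ∧ HasResolutionLength Y m M}

/-- The `Y`-global dimension of the ambient category. -/
noncomputable def gldim (Y : Set C) : ℕ∞ := ⨆ M : C, pdim Y M

/-- A recollement of abelian categories. -/
structure Recollement (A₁ A₀ A₂ : Type*)
    [Category A₁] [Category A₀] [Category A₂]
    [Abelian A₁] [Abelian A₀] [Abelian A₂] where
  /-- `i^*` -/
  iStar : A₀ ⥤ A₁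
  /-- `i_*` -/
  iPush : A₁ ⥤ A₀
  /-- `i^!` -/
  iShriek : A₀ ⥤ A₁
  /-- `j_!` -/
  jShriek : A₂ ⥤ A₀
  /-- `j^*` -/
  jStar : A₀ ⥤ A₂
  /-- `j_*` -/
  jPush : A₂ ⥤ A₀
  iStar_additive : iStar.Additive
  iPush_additive : iPush.Additive
  iShriek_additive : iShriek.Additive
  jShriek_additive : jShriek.Additive
  jStar_additive : jStar.Additive
  jPush_additive : jPush.Additive
  adj₁ : iStar ⊣ iPush
  adj₂ : iPush ⊣ iShriek
  adj₃ : jShriek ⊣ jStar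
  adj₄ : jStar ⊣ jPush
  iPush_full : iPush.Full
  iPush_faithful : iPush.Faithful
  jShriek_full : jShriek.Full
  jShriek_faithful : jShriek.Faithful
  jPush_full : jPush.Full
  jPush_faithful : jPush.Faithful
  essImage_iPush : ∀ X : A₀, iPush.essImage X ↔ Limits.IsZero (jStar.obj X)


section Statement18Infra

/-- The closure properties of a class of objects needed for the resolution calculus. -/
structure IsNice (Y : Set C) : Prop where
  proj : ∀ P : C, Projective P → P ∈ Y
  iso' : ∀ {M N : C}, (M ≅ N) → M ∈ Y → N ∈ Y
  sum' : ∀ {M N : C}, M ∈ Y → N ∈ Y → (M ⊞ N) ∈ Y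

theorem hasRes_zero_iff {Y : Set C} {M : C} :
    HasResolutionLength Y 0 M ↔ ∃ P ∈ Y, Nonempty (M ≅ P) := Iff.rfl

theorem hasRes_succ_iff {Y : Set C} {n : ℕ} {M : C} :
    HasResolutionLength Y (n + 1) M ↔ ∃ S : ShortComplex C, S.ShortExact ∧ S.X₂ ∈ Y ∧
      Nonempty (S.X₃ ≅ M) ∧ HasResolutionLength Y n S.X₁ := Iff.rfl

theorem relSyz_zero_iff {P : C → Prop} {A M : C} :
    IsRelativeSyzygy P 0 A M ↔ Nonempty (A ≅ M) := Iff.rfl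

theorem relSyz_succ_iff {P : C → Prop} {k : ℕ} {A M : C} :
    IsRelativeSyzygy P (k + 1) A M ↔ ∃ S : ShortComplex C, S.ShortExact ∧ P S.X₂ ∧
      Nonempty (S.X₃ ≅ M) ∧ IsRelativeSyzygy P k A S.X₁ := Iff.rfl

theorem hasRes_of_iso {Y : Set C} : ∀ {n : ℕ} {M N : C}, (M ≅ N) →
    HasResolutionLength Y n M → HasResolutionLength Y n N
  | 0, _, _, e, ⟨P, hP, ⟨e'⟩⟩ => ⟨P, hP, ⟨e.symm.trans e'⟩⟩
  | (_ + 1), _, _, e, ⟨S, h1, h2, ⟨e'⟩, h3⟩ => ⟨S, h1, h2, ⟨e'.trans e⟩, h3⟩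

/-- The short complex `0 → ker f → X → Y → 0` associated to an epimorphism. -/
noncomputable abbrev sesOfEpi {X Y : C} (f : X ⟶ Y) : ShortComplex C :=
  ShortComplex.mk (kernel.ι f) f (kernel.condition f)

theorem sesOfEpi_shortExact {X Y : C} (f : X ⟶ Y) [Epi f] :
    (sesOfEpi f).ShortExact where
  exact := ShortComplex.exact_of_f_is_kernel _ (kernelIsKernel f)

theorem isZero_hasRes {Y : Set C} (hY : IsNice Y) {Z : C} (hZ : IsZero Z) :
    ∀ n : ℕ, HasResolutionLength Y n Z := by
  have hproj : Projective Z := ⟨fun f e => ⟨0, by rw [zero_comp, hZ.eq_of_src f 0]⟩⟩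
  have hmem : Z ∈ Y := hY.proj Z hproj
  intro n
  induction n with
  | zero => exact ⟨Z, hmem, ⟨Iso.refl Z⟩⟩
  | succ n ih =>
      refine ⟨ShortComplex.mk (𝟙 Z) (𝟙 Z) (hZ.eq_of_src _ _), ?_, hmem, ⟨Iso.refl Z⟩, ih⟩
      exact { exact := ShortComplex.exact_of_isZero_X₂ _ hZ }

theorem hasRes_of_mem {Y : Set C} (hY : IsNice Y) {M : C} (hM : M ∈ Y) :
    ∀ n : ℕ, HasResolutionLength Y n M := by
  intro n
  induction n with
  | zero => exact ⟨M, hM, ⟨Iso.refl M⟩⟩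
  | succ n _ =>
      refine ⟨sesOfEpi (𝟙 M), sesOfEpi_shortExact _, hM, ⟨Iso.refl M⟩, ?_⟩
      refine isZero_hasRes hY ?_ n
      refine IsZero.of_mono_eq_zero (kernel.ι (𝟙 M)) ?_
      have := kernel.condition (𝟙 M)
      rwa [Category.comp_id] at this

theorem hasRes_succ {Y : Set C} (hY : IsNice Y) :
    ∀ {n : ℕ} {M : C}, HasResolutionLength Y n M → HasResolutionLength Y (n + 1) M
  | 0, M, ⟨P, hP, ⟨e⟩⟩ => by
      refine ⟨sesOfEpi (𝟙 P), sesOfEpi_shortExact _, hP, ⟨e.symm⟩, ?_⟩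
      refine isZero_hasRes hY ?_ 0
      refine IsZero.of_mono_eq_zero (kernel.ι (𝟙 P)) ?_
      have := kernel.condition (𝟙 P)
      rwa [Category.comp_id] at this
  | (n + 1), M, ⟨S, h1, h2, h3, h4⟩ => ⟨S, h1, h2, h3, hasRes_succ hY h4⟩

theorem hasRes_mono {Y : Set C} (hY : IsNice Y) {m n : ℕ} (h : m ≤ n) {M : C}
    (hres : HasResolutionLength Y m M) : HasResolutionLength Y n M := by
  induction n with
  | zero => obtain rfl := Nat.le_zero.mp h; exact hres
  | succ n ih =>
      rcases Nat.eq_or_lt_of_le h with rfl | h'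
      · exact hres
      · exact hasRes_succ hY (ih (Nat.lt_succ_iff.mp h'))

theorem shortExact_postcomp {S : ShortComplex C} (hS : S.ShortExact) {W : C} (e : S.X₃ ≅ W) :
    (ShortComplex.mk S.f (S.g ≫ e.hom)
      (by rw [← Category.assoc, S.zero, zero_comp])).ShortExact := by
  refine ShortComplex.shortExact_of_iso (S₁ := S) ?_ hS
  exact ShortComplex.isoMk (Iso.refl _) (Iso.refl _) e (by simp) (by simp)

/-- The direct sum of two short complexes. -/
noncomputable abbrev sesSum (S T : ShortComplex C) : ShortComplex C :=
  ShortComplex.mk (biprod.map S.f T.f) (biprod.map S.g T.g) (by ext <;> simp)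

theorem sesSum_shortExact {S T : ShortComplex C} (hS : S.ShortExact) (hT : T.ShortExact) :
    (sesSum S T).ShortExact := by
  have hmS := hS.mono_f; have hmT := hT.mono_f
  have heS := hS.epi_g; have heT := hT.epi_g
  have hmono : Mono (biprod.map S.f T.f) := by
    refine Preadditive.mono_of_cancel_zero _ (fun u hu => ?_)
    have h1 : (u ≫ biprod.fst) ≫ S.f = 0 := by
      rw [Category.assoc]; simpa using hu =≫ biprod.fst
    have h2 : (u ≫ biprod.snd) ≫ T.f = 0 := by
      rw [Category.assoc]; simpa using hu =≫ biprod.snd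
    apply biprod.hom_ext
    · rw [zero_comp]; exact zero_of_comp_mono S.f h1
    · rw [zero_comp]; exact zero_of_comp_mono T.f h2
  refine { exact := ?_, mono_f := hmono, epi_g := ?_ }
  · refine ShortComplex.exact_of_f_is_kernel _ ?_
    refine KernelFork.IsLimit.ofι' _ _ (fun {A} k hk => ?_)
    have hk1 : (k ≫ biprod.fst) ≫ S.g = 0 := by
      rw [Category.assoc]; simpa using hk =≫ biprod.fst
    have hk2 : (k ≫ biprod.snd) ≫ T.g = 0 := by
      rw [Category.assoc]; simpa using hk =≫ biprod.snd
    refine ⟨biprod.lift (hS.exact.lift _ hk1) (hT.exact.lift _ hk2), ?_⟩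
    apply biprod.hom_ext <;> simp
  · refine Preadditive.epi_of_cancel_zero _ (fun u hu => ?_)
    have h1 : S.g ≫ biprod.inl ≫ u = 0 := by
      rw [← Category.assoc]; simpa using biprod.inl ≫= hu
    have h2 : T.g ≫ biprod.inr ≫ u = 0 := by
      rw [← Category.assoc]; simpa using biprod.inr ≫= hu
    apply biprod.hom_ext'
    · rw [comp_zero]; exact zero_of_epi_comp S.g h1
    · rw [comp_zero]; exact zero_of_epi_comp T.g h2

theorem hasRes_sum {Y : Set C} (hY : IsNice Y) :
    ∀ {n : ℕ} {M N : C}, HasResolutionLength Y n M → HasResolutionLength Y n N →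
      HasResolutionLength Y n (M ⊞ N)
  | 0, _, _, ⟨P, hP, ⟨e⟩⟩, ⟨Q, hQ, ⟨e'⟩⟩ =>
      ⟨P ⊞ Q, hY.sum' hP hQ, ⟨biprod.mapIso e e'⟩⟩
  | (n + 1), _, _, ⟨S, h1, h2, ⟨e⟩, h4⟩, ⟨T, h1', h2', ⟨e'⟩, h4'⟩ =>
      ⟨sesSum S T, sesSum_shortExact h1 h1', hY.sum' h2 h2', ⟨biprod.mapIso e e'⟩,
        hasRes_sum hY h4 h4'⟩

section Pullbacks

variable {S : ShortComplex C}

/-- Base change of a short exact sequence along `h : Z ⟶ S.X₃` :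
the sequence `0 → S.X₁ → S.X₂ ×_{S.X₃} Z → Z → 0`. -/
noncomputable abbrev pbSES (S : ShortComplex C) {Z : C} (h : Z ⟶ S.X₃) : ShortComplex C :=
  ShortComplex.mk (pullback.lift S.f 0 (by rw [S.zero, zero_comp]))
    (pullback.snd S.g h) (by simp [pullback.lift_snd])

theorem pbSES_shortExact (hS : S.ShortExact) {Z : C} (h : Z ⟶ S.X₃) :
    (pbSES S h).ShortExact := by
  have := hS.mono_f
  have := hS.epi_g
  have hfac : (pbSES S h).f ≫ pullback.fst S.g h = S.f := by simp [pullback.lift_fst]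
  have hmono : Mono (pbSES S h).f := mono_of_mono_fac hfac
  refine { exact := ?_, mono_f := hmono, epi_g := ?_ }
  · refine ShortComplex.exact_of_f_is_kernel _ ?_
    refine KernelFork.IsLimit.ofι' _ _ (fun {A} k hk => ?_)
    have hk' : (k ≫ pullback.fst S.g h) ≫ S.g = 0 := by
      rw [Category.assoc, pullback.condition, ← Category.assoc, hk, zero_comp]
    refine ⟨hS.exact.lift _ hk', ?_⟩
    apply pullback.hom_ext <;> simp [hk, pullback.lift_fst, pullback.lift_snd, pullback.lift_fst_assoc, pullback.lift_snd_assoc]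
  · exact inferInstance

/-- For a morphism `q : W ⟶ S.X₂` the sequence
`0 → W ×_{S.X₂} S.X₁ → W → S.X₃ → 0` is exact (`q` epi). -/
noncomputable abbrev pbSES₂ (S : ShortComplex C) {W : C} (q : W ⟶ S.X₂) : ShortComplex C :=
  ShortComplex.mk (pullback.fst q S.f) (q ≫ S.g)
    (by rw [← Category.assoc, pullback.condition, Category.assoc, S.zero, comp_zero])

theorem pbSES₂_shortExact (hS : S.ShortExact) {W : C} (q : W ⟶ S.X₂) [Epi q] :
    (pbSES₂ S q).ShortExact := by
  have := hS.mono_f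
  have := hS.epi_g
  refine { exact := ?_, mono_f := inferInstanceAs (Mono (pullback.fst q S.f)), epi_g := ?_ }
  · refine ShortComplex.exact_of_f_is_kernel _ ?_
    refine KernelFork.IsLimit.ofι' _ _ (fun {A} k hk => ?_)
    rw [← Category.assoc] at hk
    refine ⟨pullback.lift k (hS.exact.lift _ hk) (by simp), by simp [pullback.lift_fst]⟩
  · exact epi_comp _ _

end Pullbacks

section Snake

variable {S₁ S₂ : ShortComplex C} (φ : S₁ ⟶ S₂)

/-- The short complex of kernels of a morphism of short complexes. -/
noncomputable abbrev kerSES : ShortComplex C :=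
  ShortComplex.mk (kernel.map φ.τ₁ φ.τ₂ S₁.f S₂.f φ.comm₁₂)
    (kernel.map φ.τ₂ φ.τ₃ S₁.g S₂.g φ.comm₂₃)
    (by
      apply zero_of_comp_mono (kernel.ι φ.τ₃)
      simp)

theorem kerSES_shortExact (h₁ : S₁.ShortExact) (h₂ : S₂.ShortExact) [Epi φ.τ₁] :
    (kerSES φ).ShortExact := by
  have hm₁ := h₁.mono_f
  have hm₂ := h₂.mono_f
  have he₁ := h₁.epi_g
  have he₂ := h₂.epi_g
  have hmono : Mono (kerSES φ).f := by
    have hf : Mono ((kerSES φ).f ≫ kernel.ι φ.τ₂) := by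
      have hfac : (kerSES φ).f ≫ kernel.ι φ.τ₂ = kernel.ι φ.τ₁ ≫ S₁.f := by simp
      rw [hfac]; exact mono_comp _ _
    exact mono_of_mono _ (kernel.ι φ.τ₂)
  refine { exact := ?_, mono_f := hmono, epi_g := ?_ }
  · refine ShortComplex.exact_of_f_is_kernel _ ?_
    refine KernelFork.IsLimit.ofι' _ _ (fun {A} k hk => ?_)
    have hk' : (k ≫ kernel.ι φ.τ₂) ≫ S₁.g = 0 := by
      have h0 : k ≫ kernel.map φ.τ₂ φ.τ₃ S₁.g S₂.g φ.comm₂₃ ≫ kernel.ι φ.τ₃ = 0 := by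
        rw [← Category.assoc, hk, zero_comp]
      simpa using h0
    set t := h₁.exact.lift _ hk' with ht
    have htf : t ≫ S₁.f = k ≫ kernel.ι φ.τ₂ := by simp [ht]
    have htz : t ≫ φ.τ₁ = 0 := by
      apply zero_of_comp_mono S₂.f
      rw [Category.assoc, φ.comm₁₂, ← Category.assoc, htf, Category.assoc, kernel.condition,
        comp_zero]
    refine ⟨kernel.lift φ.τ₁ t htz, ?_⟩
    rw [← cancel_mono (kernel.ι φ.τ₂)]
    simp [htf]
  · rw [epi_iff_surjective_up_to_refinements]
    intro A y
    obtain ⟨A₁, π₁, hπ₁, x₂, hx₂⟩ :=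
      surjective_up_to_refinements_of_epi S₁.g (y ≫ kernel.ι φ.τ₃)
    have h1 : (x₂ ≫ φ.τ₂) ≫ S₂.g = 0 := by
      rw [Category.assoc, φ.comm₂₃, ← Category.assoc, ← hx₂]
      simp
    obtain ⟨A₂, π₂, hπ₂, w₁, hw₁⟩ := h₂.exact.exact_up_to_refinements (x₂ ≫ φ.τ₂) h1
    obtain ⟨A₃, π₃, hπ₃, a₁, ha₁⟩ := surjective_up_to_refinements_of_epi φ.τ₁ w₁
    set x : A₃ ⟶ S₁.X₂ := π₃ ≫ π₂ ≫ x₂ - a₁ ≫ S₁.f with hx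
    have hxτ : x ≫ φ.τ₂ = 0 := by
      rw [hx, Preadditive.sub_comp]
      have e1 : (π₃ ≫ π₂ ≫ x₂) ≫ φ.τ₂ = π₃ ≫ w₁ ≫ S₂.f := by
        rw [Category.assoc, Category.assoc, hw₁]
      have e2 : (a₁ ≫ S₁.f) ≫ φ.τ₂ = π₃ ≫ w₁ ≫ S₂.f := by
        rw [Category.assoc, ← φ.comm₁₂, ← Category.assoc, ← ha₁, Category.assoc]
      rw [e1, e2, sub_self]
    refine ⟨A₃, π₃ ≫ π₂ ≫ π₁, inferInstance, kernel.lift φ.τ₂ x hxτ, ?_⟩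
    rw [← cancel_mono (kernel.ι φ.τ₃)]
    have e3 : (kerSES φ).g ≫ kernel.ι φ.τ₃ = kernel.ι φ.τ₂ ≫ S₁.g := by simp
    conv_rhs => rw [Category.assoc, e3, ← Category.assoc, kernel.lift_ι]
    have e4 : (a₁ ≫ S₁.f) ≫ S₁.g = 0 := by
      rw [Category.assoc, S₁.zero, comp_zero]
    have e5 : (π₃ ≫ π₂ ≫ x₂) ≫ S₁.g = π₃ ≫ (π₂ ≫ π₁) ≫ y ≫ kernel.ι φ.τ₃ := by
      rw [Category.assoc, Category.assoc, ← hx₂]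
      simp only [Category.assoc]
    rw [hx, Preadditive.sub_comp, e4, e5, sub_zero]
    simp only [Category.assoc]

end Snake

section Core

variable {Y : Set C}

theorem hasRes_sub (hY : IsNice Y)
    (hker : ∀ S : ShortComplex C, S.ShortExact → S.X₂ ∈ Y → S.X₃ ∈ Y → S.X₁ ∈ Y) :
    ∀ {n : ℕ} {S : ShortComplex C}, S.ShortExact → S.X₃ ∈ Y →
      HasResolutionLength Y n S.X₂ → HasResolutionLength Y n S.X₁ := by
  intro n
  induction n with
  | zero =>
      intro S hSE hX₃ h
      obtain ⟨Q, hQ, ⟨e⟩⟩ := h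
      exact ⟨S.X₁, hker S hSE (hY.iso' e.symm hQ) hX₃, ⟨Iso.refl _⟩⟩
  | succ n _ =>
      intro S hSE hX₃ h
      obtain ⟨T, hT, hT₂, ⟨e⟩, hK⟩ := h
      have hT' : (ShortComplex.mk T.f (T.g ≫ e.hom)
          (by rw [← Category.assoc, T.zero, zero_comp])).ShortExact :=
        shortExact_postcomp hT e
      set T' := ShortComplex.mk T.f (T.g ≫ e.hom)
          (by rw [← Category.assoc, T.zero, zero_comp]) with hT'def
      haveI : Epi T'.g := hT'.epi_g
      have hseqA := pbSES₂_shortExact hSE T'.g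
      have hPmem : pullback T'.g S.f ∈ Y := hker _ hseqA hT₂ hX₃
      have hseqB := pbSES_shortExact hT' S.f
      exact ⟨pbSES T' S.f, hseqB, hPmem, ⟨Iso.refl _⟩, hK⟩

theorem hasRes_kernel_of_projective (hY : IsNice Y)
    (hker : ∀ S : ShortComplex C, S.ShortExact → S.X₂ ∈ Y → S.X₃ ∈ Y → S.X₁ ∈ Y)
    {S : ShortComplex C} (hSE : S.ShortExact) (hproj : Projective S.X₂) {n : ℕ}
    (h : HasResolutionLength Y (n + 1) S.X₃) : HasResolutionLength Y n S.X₁ := by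
  obtain ⟨T, hT, hT₂, ⟨e⟩, hK⟩ := h
  have hT' : (ShortComplex.mk T.f (T.g ≫ e.hom)
      (by rw [← Category.assoc, T.zero, zero_comp])).ShortExact :=
    shortExact_postcomp hT e
  set T' := ShortComplex.mk T.f (T.g ≫ e.hom)
      (by rw [← Category.assoc, T.zero, zero_comp]) with hT'def
  haveI : Epi T'.g := hT'.epi_g
  haveI : Epi S.g := hSE.epi_g
  have hA := pbSES_shortExact hSE T'.g
  have hB := pbSES_shortExact hT' S.g
  haveI : Projective ((pbSES T' S.g).X₃) := hproj
  have hiso : pullback T'.g S.g ≅ T.X₁ ⊞ S.X₂ :=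
    (hB.splittingOfProjective).isoBinaryBiproduct
  have hres₂ : HasResolutionLength Y n (pullback T'.g S.g) :=
    hasRes_of_iso hiso.symm (hasRes_sum hY hK (hasRes_of_mem hY (hY.proj _ hproj) n))
  have hres₁ : HasResolutionLength Y n (pullback S.g T'.g) :=
    hasRes_of_iso (pullbackSymmetry T'.g S.g) hres₂
  exact hasRes_sub hY hker (S := pbSES S T'.g) hA hT₂ hres₁

theorem syzygy_mem (hY : IsNice Y)
    (hker : ∀ S : ShortComplex C, S.ShortExact → S.X₂ ∈ Y → S.X₃ ∈ Y → S.X₁ ∈ Y) :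
    ∀ (k : ℕ) {n : ℕ}, n ≤ k → ∀ {L N : C}, HasResolutionLength Y n N →
      IsRelativeSyzygy (fun Z : C => Projective Z) k L N → L ∈ Y := by
  intro k
  induction k with
  | zero =>
      intro n hn L N hres hsyz
      obtain rfl := Nat.le_zero.mp hn
      obtain ⟨e⟩ := hsyz
      obtain ⟨Q, hQ, ⟨e'⟩⟩ := hres
      exact hY.iso' (e.trans e').symm hQ
  | succ k ih =>
      intro n hn L N hres hsyz
      obtain ⟨S, hSE, hproj, ⟨e⟩, hrec⟩ := hsyz
      cases n with
      | zero =>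
          obtain ⟨Q, hQ, ⟨e'⟩⟩ := hres
          have hX₃ : S.X₃ ∈ Y := hY.iso' (e.trans e').symm hQ
          have hX₁ : S.X₁ ∈ Y := hker S hSE (hY.proj _ hproj) hX₃
          exact ih (Nat.zero_le k) ⟨S.X₁, hX₁, ⟨Iso.refl _⟩⟩ hrec
      | succ n =>
          have hres' : HasResolutionLength Y (n + 1) S.X₃ := hasRes_of_iso e.symm hres
          exact ih (Nat.succ_le_succ_iff.mp hn)
            (hasRes_kernel_of_projective hY hker hSE hproj hres') hrec

theorem hasRes_mid [EnoughProjectives C] (hY : IsNice Y)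
    (hker : ∀ S : ShortComplex C, S.ShortExact → S.X₂ ∈ Y → S.X₃ ∈ Y → S.X₁ ∈ Y)
    (hext : ∀ S : ShortComplex C, S.ShortExact → S.X₁ ∈ Y → S.X₃ ∈ Y → S.X₂ ∈ Y) :
    ∀ {n : ℕ} {S : ShortComplex C}, S.ShortExact → HasResolutionLength Y n S.X₁ →
      HasResolutionLength Y n S.X₃ → HasResolutionLength Y n S.X₂ := by
  intro n
  induction n with
  | zero =>
      intro S hSE h1 h3
      obtain ⟨Q, hQ, ⟨e⟩⟩ := h1
      obtain ⟨Q', hQ', ⟨e'⟩⟩ := h3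
      exact ⟨S.X₂, hext S hSE (hY.iso' e.symm hQ) (hY.iso' e'.symm hQ'), ⟨Iso.refl _⟩⟩
  | succ n ih =>
      intro S hSE h1 h3
      obtain ⟨T, hT, hT₂, ⟨e⟩, hK⟩ := h1
      haveI := hSE.epi_g
      have hT' : (ShortComplex.mk T.f (T.g ≫ e.hom)
          (by rw [← Category.assoc, T.zero, zero_comp])).ShortExact :=
        shortExact_postcomp hT e
      set T' := ShortComplex.mk T.f (T.g ≫ e.hom)
          (by rw [← Category.assoc, T.zero, zero_comp]) with hT'def
      haveI : Epi T'.g := hT'.epi_g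
      set P := Projective.over S.X₃ with hPdef
      set p : P ⟶ S.X₃ := Projective.π S.X₃ with hpdef
      haveI : Epi p := by rw [hpdef]; infer_instance
      set pt : P ⟶ S.X₂ := Projective.factorThru p S.g with hptdef
      have hptfac : pt ≫ S.g = p := Projective.factorThru_comp _ _
      set γ : (T'.X₂ ⊞ P) ⟶ S.X₂ := biprod.desc (T'.g ≫ S.f) pt with hγdef
      set R1 := ShortComplex.mk (biprod.inl : T'.X₂ ⟶ T'.X₂ ⊞ P) (biprod.snd) (by simp)
        with hR1def
      have hR1SE : R1.ShortExact := (ShortComplex.Splitting.ofHasBinaryBiproduct _ _).shortExact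
      have hcomm₂₃ : γ ≫ S.g = (biprod.snd : T'.X₂ ⊞ P ⟶ P) ≫ p := by
        apply biprod.hom_ext'
        · rw [← Category.assoc, ← Category.assoc, biprod.inl_desc, biprod.inl_snd,
            Category.assoc, S.zero, comp_zero, zero_comp]
        · rw [← Category.assoc, ← Category.assoc, biprod.inr_desc, biprod.inr_snd,
            hptfac, Category.id_comp]
      set φ : R1 ⟶ S := ⟨T'.g, γ, p, (biprod.inl_desc _ _).symm, hcomm₂₃⟩ with hφdef
      have hγepi : Epi γ := by
        refine Preadditive.epi_of_cancel_zero _ (fun {R} c hc => ?_)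
        have h1' : T'.g ≫ S.f ≫ c = 0 := by
          have := biprod.inl ≫= hc
          rw [← Category.assoc, biprod.inl_desc, comp_zero, Category.assoc] at this
          exact this
        have h2' : S.f ≫ c = 0 := zero_of_epi_comp T'.g h1'
        set c' := hSE.exact.desc c h2' with hc'def
        have hc' : S.g ≫ c' = c := hSE.exact.g_desc c h2'
        have h3' : pt ≫ c = 0 := by
          have := biprod.inr ≫= hc
          rw [← Category.assoc, biprod.inr_desc, comp_zero] at this
          exact this
        have h4' : p ≫ c' = 0 := by
          rw [← hptfac, Category.assoc, hc', h3']
        have : c' = 0 := zero_of_epi_comp p h4'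
        rw [← hc', this, comp_zero]
      haveI : Epi φ.τ₁ := hT'.epi_g
      have hKSE := kerSES_shortExact φ hR1SE hSE
      -- identify the three kernels
      have hisoT := IsLimit.conePointUniqueUpToIso hT'.fIsKernel (kernelIsKernel T'.g)
      have hresτ₁ : HasResolutionLength Y n (kernel T'.g) := by
        exact hasRes_of_iso hisoT hK
      have hresτ₃ : HasResolutionLength Y n (kernel p) := by
        refine hasRes_kernel_of_projective hY hker (S := sesOfEpi p) (sesOfEpi_shortExact p)
          ?_ h3
        exact inferInstanceAs (Projective P)
      have hresE : HasResolutionLength Y n (kernel γ) := by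
        refine ih hKSE ?_ ?_
        · exact hresτ₁
        · exact hresτ₃
      haveI : Epi γ := hγepi
      refine ⟨sesOfEpi γ, sesOfEpi_shortExact γ, hY.sum' hT₂ (hY.proj P inferInstance),
        ⟨Iso.refl _⟩, hresE⟩

theorem splice_syzygy (hY : IsNice Y) :
    ∀ {k n : ℕ} {L M : C}, IsRelativeSyzygy (fun Z : C => Projective Z) k L M →
      HasResolutionLength Y n L → HasResolutionLength Y (n + k) M
  | 0, _, _, _, ⟨e⟩, h => hasRes_of_iso e h
  | (k + 1), n, L, M, ⟨S, hSE, hproj, he, hrec⟩, h =>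
      ⟨S, hSE, hY.proj _ hproj, he, splice_syzygy hY hrec h⟩

theorem exists_syzygy [EnoughProjectives C] :
    ∀ (k : ℕ) (M : C), ∃ L : C, IsRelativeSyzygy (fun Z : C => Projective Z) k L M
  | 0, M => ⟨M, ⟨Iso.refl M⟩⟩
  | (k + 1), M => by
      obtain ⟨L, hL⟩ := exists_syzygy k (kernel (Projective.π M))
      exact ⟨L, sesOfEpi (Projective.π M), sesOfEpi_shortExact _,
        inferInstanceAs (Projective (Projective.over M)), ⟨Iso.refl M⟩, hL⟩

end Core

section FunctorImage

variable {Y : Set C} {Y' : Set D}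

theorem hasRes_map (F : C ⥤ D) [F.Additive]
    [PreservesFiniteLimits F] [PreservesFiniteColimits F]
    (hmem : ∀ M ∈ Y, F.obj M ∈ Y') :
    ∀ {n : ℕ} {M : C}, HasResolutionLength Y n M → HasResolutionLength Y' n (F.obj M)
  | 0, _, ⟨P, hP, ⟨e⟩⟩ => ⟨F.obj P, hmem P hP, ⟨F.mapIso e⟩⟩
  | (n + 1), _, ⟨S, h1, h2, ⟨e⟩, h4⟩ =>
      ⟨S.map F, h1.map_of_exact F, hmem _ h2, ⟨F.mapIso e⟩, hasRes_map F hmem h4⟩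

theorem relSyz_map (F : C ⥤ D) [F.Additive]
    [PreservesFiniteLimits F] [PreservesFiniteColimits F]
    (hproj : ∀ Z : C, Projective Z → Projective (F.obj Z)) :
    ∀ {k : ℕ} {L M : C}, IsRelativeSyzygy (fun Z : C => Projective Z) k L M →
      IsRelativeSyzygy (fun Z : D => Projective Z) k (F.obj L) (F.obj M)
  | 0, _, _, ⟨e⟩ => ⟨F.mapIso e⟩
  | (k + 1), _, _, ⟨S, h1, h2, ⟨e⟩, h4⟩ =>
      ⟨S.map F, h1.map_of_exact F, hproj _ h2, ⟨F.mapIso e⟩, relSyz_map F hproj h4⟩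

end FunctorImage

section Dimensions

variable {Y : Set C}

theorem pdim_le_of_hasRes {M : C} {n : ℕ} (h : HasResolutionLength Y n M) :
    pdim Y M ≤ (n : ℕ∞) :=
  sInf_le ⟨n, rfl, h⟩

theorem hasRes_of_pdim_le (hY : IsNice Y) {M : C} {n : ℕ} (h : pdim Y M ≤ (n : ℕ∞)) :
    HasResolutionLength Y n M := by
  have hne : {k : ℕ∞ | ∃ m : ℕ, k = (m : ℕ∞) ∧ HasResolutionLength Y m M}.Nonempty := by
    by_contra hne
    rw [Set.not_nonempty_iff_eq_empty] at hne
    rw [pdim, hne, sInf_empty] at h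
    exact absurd (le_antisymm le_top h) (by simp)
  obtain ⟨m, hm, hres⟩ := csInf_mem hne
  rw [pdim, hm] at h
  exact hasRes_mono hY (by exact_mod_cast h) hres

theorem pdim_le_gldim (M : C) : pdim Y M ≤ gldim Y := le_iSup _ M

theorem gldim_le_iff {c : ℕ∞} : gldim Y ≤ c ↔ ∀ M : C, pdim Y M ≤ c := iSup_le_iff

end Dimensions

end Statement18Infra

end Paper

/-- In a recollement `R(A', A, A'')` with `X` resolving in `A`,
`i_* i^* X ⊆ X`, `j_! j^* X ⊆ X` and `j_*` exact:
(1) `gl.dim_X A ≤ gl.dim_{i^*X} A' + gl.dim_{j^*X} A'' + 1`;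
(2) `gl.dim_{j^*X} A'' ≤ gl.dim_X A`. -/
theorem Paper.statement18
    {A' A A'' : Type*} [Category A'] [Category A] [Category A'']
    [Abelian A'] [Abelian A] [Abelian A'']
    [EnoughProjectives A'] [EnoughInjectives A']
    [EnoughProjectives A] [EnoughInjectives A]
    [EnoughProjectives A''] [EnoughInjectives A'']
    (R : Recollement A' A A'')
    (X : Set A) (hX : IsResolving X)
    (hi : ∀ M ∈ X, R.iPush.obj (R.iStar.obj M) ∈ X)
    (hj : ∀ M ∈ X, R.jShriek.obj (R.jStar.obj M) ∈ X)
    [PreservesFiniteLimits R.jPush] [PreservesFiniteColimits R.jPush] :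
    gldim X ≤ gldim {Y : A' | ∃ M ∈ X, Nonempty (Y ≅ R.iStar.obj M)}
        + gldim {Y : A'' | ∃ M ∈ X, Nonempty (Y ≅ R.jStar.obj M)} + 1 ∧
    gldim {Y : A'' | ∃ M ∈ X, Nonempty (Y ≅ R.jStar.obj M)} ≤ gldim X := by
  classical
  haveI := R.iStar_additive
  haveI := R.iPush_additive
  haveI := R.jShriek_additive
  haveI := R.jStar_additive
  haveI := R.jPush_additive
  haveI := R.iPush_full; haveI := R.iPush_faithful
  haveI := R.jShriek_full; haveI := R.jShriek_faithful
  haveI := R.jPush_full; haveI := R.jPush_faithful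
  haveI : PreservesLimitsOfSize.{0, 0} R.iPush := R.adj₁.rightAdjoint_preservesLimits
  haveI : PreservesColimitsOfSize.{0, 0} R.iPush := R.adj₂.leftAdjoint_preservesColimits
  haveI : PreservesLimitsOfSize.{0, 0} R.jStar := R.adj₃.rightAdjoint_preservesLimits
  haveI : PreservesColimitsOfSize.{0, 0} R.jStar := R.adj₄.leftAdjoint_preservesColimits
  haveI : PreservesColimitsOfSize.{0, 0} R.iStar := R.adj₁.leftAdjoint_preservesColimits
  haveI : PreservesColimitsOfSize.{0, 0} R.jShriek := R.adj₃.leftAdjoint_preservesColimits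
  haveI : PreservesFiniteLimits R.iPush := PreservesLimitsOfSize.preservesFiniteLimits _
  haveI : PreservesFiniteColimits R.iPush := PreservesColimitsOfSize.preservesFiniteColimits _
  haveI : PreservesFiniteLimits R.jStar := PreservesLimitsOfSize.preservesFiniteLimits _
  haveI : PreservesFiniteColimits R.jStar := PreservesColimitsOfSize.preservesFiniteColimits _
  haveI : PreservesFiniteColimits R.jShriek := PreservesColimitsOfSize.preservesFiniteColimits _
  haveI : PreservesFiniteColimits R.iStar := PreservesColimitsOfSize.preservesFiniteColimits _
  haveI : PreservesBinaryBiproducts R.jStar :=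
    preservesBinaryBiproducts_of_preservesBinaryProducts _
  haveI : PreservesBinaryBiproducts R.iStar :=
    preservesBinaryBiproducts_of_preservesBinaryCoproducts _
  set Y' : Set A' := {Z : A' | ∃ M ∈ X, Nonempty (Z ≅ R.iStar.obj M)} with hY'def
  set Y'' : Set A'' := {Z : A'' | ∃ M ∈ X, Nonempty (Z ≅ R.jStar.obj M)} with hY''def
  -- basic closure properties of X
  have hXiso : ∀ {M N : A}, (M ≅ N) → M ∈ X → N ∈ X := fun e hM =>
    hX.summand_mem _ hM _ e.inv e.hom e.inv_hom_id
  have hXext : ∀ S : ShortComplex A, S.ShortExact → S.X₁ ∈ X → S.X₃ ∈ X → S.X₂ ∈ X :=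
    fun S hSE h1 h3 => (hX.two_of_three S hSE h3).mp h1
  have hXker : ∀ S : ShortComplex A, S.ShortExact → S.X₂ ∈ X → S.X₃ ∈ X → S.X₁ ∈ X :=
    fun S hSE h2 h3 => (hX.two_of_three S hSE h3).mpr h2
  have hXsum : ∀ {M N : A}, M ∈ X → N ∈ X → (M ⊞ N) ∈ X := fun {M N} h1 h2 =>
    hXext (ShortComplex.mk (biprod.inl : M ⟶ M ⊞ N) (biprod.snd : M ⊞ N ⟶ N) (by simp))
      ((ShortComplex.Splitting.ofHasBinaryBiproduct M N).shortExact) h1 h2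
  have hXnice : IsNice X :=
    ⟨hX.projective_mem, fun e h => hXiso e h, fun h1 h2 => hXsum h1 h2⟩
  -- transfer between Y'' and X
  have hjx : ∀ {N : A''}, R.jShriek.obj N ∈ X → N ∈ Y'' := fun {N} h =>
    ⟨R.jShriek.obj N, h, ⟨asIso (R.adj₃.unit.app N)⟩⟩
  have hxj : ∀ {N : A''}, N ∈ Y'' → R.jShriek.obj N ∈ X := by
    rintro N ⟨M, hM, ⟨e⟩⟩
    exact hXiso (R.jShriek.mapIso e).symm (hj M hM)
  -- Y'' is nice
  have hY''proj : ∀ Q : A'', Projective Q → Q ∈ Y'' := by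
    intro Q hQ
    haveI := hQ
    set P := Projective.over (R.jShriek.obj Q) with hPdef
    set π : P ⟶ R.jShriek.obj Q := Projective.π (R.jShriek.obj Q) with hπdef
    haveI : Epi π := by rw [hπdef]; infer_instance
    set u : R.jStar.obj P ⟶ Q := R.jStar.map π ≫ (asIso (R.adj₃.unit.app Q)).inv with hudef
    haveI : Epi (R.jStar.map π) := inferInstance
    haveI : Epi u := by rw [hudef]; exact epi_comp _ _
    set s : Q ⟶ R.jStar.obj P := Projective.factorThru (𝟙 Q) u with hsdef
    have hretr : s ≫ u = 𝟙 Q := Projective.factorThru_comp _ _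
    have h1 : R.jShriek.obj (R.jStar.obj P) ∈ X :=
      hj P (hX.projective_mem P inferInstance)
    have h2 : R.jShriek.obj Q ∈ X := by
      refine hX.summand_mem _ h1 _ (R.jShriek.map s) (R.jShriek.map u) ?_
      rw [← CategoryTheory.Functor.map_comp, hretr, CategoryTheory.Functor.map_id]
    exact hjx h2
  have hY''nice : IsNice Y'' := by
    refine ⟨hY''proj, ?_, ?_⟩
    · rintro M N e ⟨M₀, hM₀, ⟨e'⟩⟩
      exact ⟨M₀, hM₀, ⟨e.symm.trans e'⟩⟩
    · rintro M N ⟨M₀, hM₀, ⟨e₀⟩⟩ ⟨N₀, hN₀, ⟨e₁⟩⟩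
      haveI : PreservesBinaryBiproduct M₀ N₀ R.jStar := PreservesBinaryBiproducts.preserves
      exact ⟨M₀ ⊞ N₀, hXsum hM₀ hN₀,
        ⟨(biprod.mapIso e₀ e₁).trans (R.jStar.mapBiprod M₀ N₀).symm⟩⟩
  have hY''ker : ∀ S : ShortComplex A'', S.ShortExact → S.X₂ ∈ Y'' → S.X₃ ∈ Y'' →
      S.X₁ ∈ Y'' := by
    intro S hSE h2 h3
    haveI := hSE.epi_g
    haveI : Epi (R.jShriek.map S.g) := inferInstance
    have hkX : kernel (R.jShriek.map S.g) ∈ X :=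
      hXker (sesOfEpi (R.jShriek.map S.g)) (sesOfEpi_shortExact _) (hxj h2) (hxj h3)
    have e₁ := IsLimit.conePointUniqueUpToIso hSE.fIsKernel (kernelIsKernel S.g)
    have hnat : S.g ≫ (asIso (R.adj₃.unit.app S.X₃)).hom =
        (asIso (R.adj₃.unit.app S.X₂)).hom ≫ R.jStar.map (R.jShriek.map S.g) := by
      simpa using R.adj₃.unit.naturality S.g
    have e₂ : kernel S.g ≅ kernel (R.jStar.map (R.jShriek.map S.g)) :=
      kernel.mapIso _ _ (asIso (R.adj₃.unit.app S.X₂)) (asIso (R.adj₃.unit.app S.X₃)) hnat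
    have e₃ : kernel (R.jStar.map (R.jShriek.map S.g)) ≅
        R.jStar.obj (kernel (R.jShriek.map S.g)) :=
      (PreservesKernel.iso R.jStar _).symm
    exact ⟨kernel (R.jShriek.map S.g), hkX, ⟨(e₁ ≪≫ e₂) ≪≫ e₃⟩⟩
  -- transfer between Y' and X
  have hxi : ∀ {W : A'}, W ∈ Y' → R.iPush.obj W ∈ X := by
    rintro W ⟨M, hM, ⟨e⟩⟩
    exact hXiso (R.iPush.mapIso e).symm (hi M hM)
  have hix : ∀ {W : A'}, R.iPush.obj W ∈ X → W ∈ Y' := fun {W} h =>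
    ⟨R.iPush.obj W, h, ⟨(asIso (R.adj₁.counit.app W)).symm⟩⟩
  have hY'proj : ∀ Q : A', Projective Q → Q ∈ Y' := by
    intro Q hQ
    haveI := hQ
    set P := Projective.over (R.iPush.obj Q) with hPdef
    set π : P ⟶ R.iPush.obj Q := Projective.π (R.iPush.obj Q) with hπdef
    haveI : Epi π := by rw [hπdef]; infer_instance
    set u : R.iStar.obj P ⟶ Q := R.iStar.map π ≫ (asIso (R.adj₁.counit.app Q)).hom with hudef
    haveI : Epi (R.iStar.map π) := inferInstance
    haveI : Epi u := by rw [hudef]; exact epi_comp _ _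
    set s : Q ⟶ R.iStar.obj P := Projective.factorThru (𝟙 Q) u with hsdef
    have hretr : s ≫ u = 𝟙 Q := Projective.factorThru_comp _ _
    have h1 : R.iPush.obj (R.iStar.obj P) ∈ X :=
      hi P (hX.projective_mem P inferInstance)
    have h2 : R.iPush.obj Q ∈ X := by
      refine hX.summand_mem _ h1 _ (R.iPush.map s) (R.iPush.map u) ?_
      rw [← CategoryTheory.Functor.map_comp, hretr, CategoryTheory.Functor.map_id]
    exact hix h2
  have hY'nice : IsNice Y' := by
    refine ⟨hY'proj, ?_, ?_⟩
    · rintro M N e ⟨M₀, hM₀, ⟨e'⟩⟩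
      exact ⟨M₀, hM₀, ⟨e.symm.trans e'⟩⟩
    · rintro M N ⟨M₀, hM₀, ⟨e₀⟩⟩ ⟨N₀, hN₀, ⟨e₁⟩⟩
      haveI : PreservesBinaryBiproduct M₀ N₀ R.iStar := PreservesBinaryBiproducts.preserves
      exact ⟨M₀ ⊞ N₀, hXsum hM₀ hN₀,
        ⟨(biprod.mapIso e₀ e₁).trans (R.iStar.mapBiprod M₀ N₀).symm⟩⟩
  constructor
  · -- part (1)
    rcases eq_or_ne (gldim Y') ⊤ with hm' | hm'
    · rw [hm', top_add, top_add]; exact le_top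
    rcases eq_or_ne (gldim Y'') ⊤ with hk' | hk'
    · rw [hk', add_top, top_add]; exact le_top
    obtain ⟨m, hm⟩ := WithTop.ne_top_iff_exists.mp hm'
    obtain ⟨k, hk⟩ := WithTop.ne_top_iff_exists.mp hk'
    have hm2 : gldim Y' = (m : ℕ∞) := by exact_mod_cast hm.symm
    have hk2 : gldim Y'' = (k : ℕ∞) := by exact_mod_cast hk.symm
    rw [gldim_le_iff]
    intro M
    have key : HasResolutionLength X (m + 1 + k) M := by
      obtain ⟨L, hL⟩ := exists_syzygy k M
      have hpdim'' : pdim Y'' (R.jStar.obj M) ≤ (k : ℕ∞) := by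
        rw [← hk2]; exact pdim_le_gldim _
      have hres'' : HasResolutionLength Y'' k (R.jStar.obj M) :=
        hasRes_of_pdim_le hY''nice hpdim''
      have hsyz'' := relSyz_map R.jStar (fun Z hZ => R.adj₄.map_projective Z hZ) hL
      have hjL : R.jStar.obj L ∈ Y'' := syzygy_mem hY''nice hY''ker k le_rfl hres'' hsyz''
      have hNX : R.jShriek.obj (R.jStar.obj L) ∈ X := hxj hjL
      obtain ⟨ε, hεdef⟩ : ∃ ε' : R.jShriek.obj (R.jStar.obj L) ⟶ L,
          ε' = R.adj₃.counit.app L := ⟨_, rfl⟩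
      haveI : IsIso (R.jStar.map ε) := by
        have h := R.adj₃.right_triangle_components L
        haveI : IsIso (R.adj₃.unit.app (R.jStar.obj L) ≫ R.jStar.map ε) := by
          rw [hεdef, h]
          exact ⟨⟨𝟙 _, by simp, by simp⟩⟩
        exact IsIso.of_isIso_comp_left (R.adj₃.unit.app (R.jStar.obj L)) (R.jStar.map ε)
      have hUzero : IsZero (R.jStar.obj (kernel ε)) := by
        have h0 : IsZero (kernel (R.jStar.map ε)) := by
          refine IsZero.of_mono_eq_zero (kernel.ι (R.jStar.map ε)) ?_
          have hc : kernel.ι (R.jStar.map ε) ≫ R.jStar.map ε = 0 ≫ R.jStar.map ε := by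
            rw [kernel.condition, zero_comp]
          exact (cancel_mono _).mp hc
        exact h0.of_iso (PreservesKernel.iso R.jStar ε)
      have hVzero : IsZero (R.jStar.obj (cokernel ε)) := by
        have h0 : IsZero (cokernel (R.jStar.map ε)) := by
          refine IsZero.of_epi_eq_zero (cokernel.π (R.jStar.map ε)) ?_
          have hc : R.jStar.map ε ≫ cokernel.π (R.jStar.map ε) = R.jStar.map ε ≫ 0 := by
            rw [cokernel.condition, comp_zero]
          exact (cancel_epi _).mp hc
        exact h0.of_iso (PreservesCokernel.iso R.jStar ε)
      have hU := (R.essImage_iPush (kernel ε)).mpr hUzero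
      have hV := (R.essImage_iPush (cokernel ε)).mpr hVzero
      have hresArb : ∀ (Z : A), R.iPush.essImage Z → HasResolutionLength X m Z := by
        intro Z hZ
        have hp' : pdim Y' (Functor.essImage.witness hZ) ≤ (m : ℕ∞) := by
          rw [← hm2]; exact pdim_le_gldim _
        have hr' := hasRes_of_pdim_le hY'nice hp'
        have hr'' := hasRes_map R.iPush (fun W hW => hxi hW) hr'
        exact hasRes_of_iso (Functor.essImage.getIso hZ) hr''
      have hresU : HasResolutionLength X m (kernel ε) := hresArb _ hU
      have hresV : HasResolutionLength X m (cokernel ε) := hresArb _ hV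
      have z₁ : kernel.ι ε ≫ Abelian.factorThruImage ε = 0 := by
        apply zero_of_comp_mono (Abelian.image.ι ε)
        rw [Category.assoc, Abelian.image.fac, kernel.condition]
      have hS₁SE : (ShortComplex.mk (kernel.ι ε) (Abelian.factorThruImage ε) z₁).ShortExact := by
        refine { exact := ?_, mono_f := inferInstance, epi_g := inferInstance }
        refine ShortComplex.exact_of_f_is_kernel _ ?_
        refine KernelFork.IsLimit.ofι' _ _ (fun {A₀} w hw => ?_)
        have hw' : w ≫ ε = 0 := by
          have h0 : w ≫ Abelian.factorThruImage ε ≫ Abelian.image.ι ε = 0 := by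
            rw [← Category.assoc, hw, zero_comp]
          simpa only [Abelian.image.fac] using h0
        exact ⟨kernel.lift ε w hw', kernel.lift_ι _ _ _⟩
      have hresIm : HasResolutionLength X (m + 1) (Abelian.image ε) :=
        ⟨ShortComplex.mk (kernel.ι ε) (Abelian.factorThruImage ε) z₁, hS₁SE, hNX,
          ⟨Iso.refl _⟩, hresU⟩
      have hS₂SE : (ShortComplex.mk (Abelian.image.ι ε) (cokernel.π ε)
          (kernel.condition (cokernel.π ε))).ShortExact := by
        refine { exact := ?_, mono_f := inferInstance, epi_g := inferInstance }
        exact ShortComplex.exact_of_f_is_kernel _ (kernelIsKernel (cokernel.π ε))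
      have hresL : HasResolutionLength X (m + 1) L := by
        refine hasRes_mid hXnice hXker hXext hS₂SE hresIm ?_
        exact hasRes_mono hXnice (Nat.le_succ m) hresV
      exact splice_syzygy hXnice hL hresL
    calc pdim X M ≤ ((m + 1 + k : ℕ) : ℕ∞) := pdim_le_of_hasRes key
      _ = (m : ℕ∞) + (k : ℕ∞) + 1 := by push_cast; rw [add_right_comm]
      _ = gldim Y' + gldim Y'' + 1 := by rw [hm2, hk2]
  · -- part (2)
    rw [gldim_le_iff]
    intro N
    have h1 : pdim Y'' N ≤ pdim X (R.jShriek.obj N) := by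
      refine le_sInf ?_
      rintro b ⟨m', rfl, hres⟩
      refine sInf_le ⟨m', rfl, ?_⟩
      have hmap := hasRes_map (Y' := Y'') R.jStar
        (fun M hM => ⟨M, hM, ⟨Iso.refl _⟩⟩) hres
      exact hasRes_of_iso (asIso (R.adj₃.unit.app N)).symm hmap
    exact h1.trans (pdim_le_gldim _)
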